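/- Let 𝒳, 𝒳' be standard Borel (Polish) spaces, let f : 𝒳 → 𝒳' be continuous and injective, and let X, Y be random variables with X taking values in 𝒳. Then I(f(X); Y) ≥ I(X; Y); combined with the data-processing inequality this yields I(f(X); Y) = I(X; Y). -/
import Mathlib


open MeasureTheory

/-- A finite measurable partition of a measurable space, indexed by `Fin n`. -/
def IsFinitePartition {α : Type*} [MeasurableSpace α] {n : ℕ} (E : Fin n → Set α) : Prop :=
  (∀ i, MeasurableSet (E i)) ∧ Pairwise (fun i j => Disjoint (E i) (E j)) ∧
    (⋃ i, E i) = Set.univ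

/-- The sum `Σ_{i,j} P_{XY}(E_i × F_j) log( P_{XY}(E_i × F_j) / (P_X(E_i) P_Y(F_j)) )`
associated to a pair of finite partitions. -/
noncomputable def partitionSum {X Y : Type*} [MeasurableSpace X] [MeasurableSpace Y]
    (μ : Measure (X × Y)) {n m : ℕ} (E : Fin n → Set X) (F : Fin m → Set Y) : ℝ :=
  ∑ i : Fin n, ∑ j : Fin m,
    (μ (E i ×ˢ F j)).toReal *
      Real.log ((μ (E i ×ˢ F j)).toReal /
        (((μ.map Prod.fst) (E i)).toReal * ((μ.map Prod.snd) (F j)).toReal))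

/-- Mutual information of a joint law `μ = P_{XY}`, defined as the supremum over all
finite measurable partitions of the two coordinate spaces. -/
noncomputable def mutualInfo {X Y : Type*} [MeasurableSpace X] [MeasurableSpace Y]
    (μ : Measure (X × Y)) : ENNReal :=
  ⨆ (n : ℕ) (m : ℕ) (E : Fin n → Set X) (F : Fin m → Set Y)
    (_ : IsFinitePartition E) (_ : IsFinitePartition F),
      ENNReal.ofReal (partitionSum μ E F)

/-- For a continuous injective map `f` between standard Borel (Polish) spaces,
`I(f(X); Y) ≥ I(X; Y)`; together with the data-processing inequality this gives
`I(f(X); Y) = I(X; Y)`. -/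
theorem mutualInfo_comp_continuous_injective_ge_and_eq
    {Ω 𝒳 𝒳' 𝒴 : Type*} [MeasurableSpace Ω]
    [TopologicalSpace 𝒳] [PolishSpace 𝒳] [MeasurableSpace 𝒳] [BorelSpace 𝒳]
    [TopologicalSpace 𝒳'] [PolishSpace 𝒳'] [MeasurableSpace 𝒳'] [BorelSpace 𝒳']
    [MeasurableSpace 𝒴]
    (P : Measure Ω) [IsProbabilityMeasure P]
    (X : Ω → 𝒳) (Y : Ω → 𝒴) (hX : Measurable X) (hY : Measurable Y)
    (f : 𝒳 → 𝒳') (hf : Continuous f) (hfinj : Function.Injective f) :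
    mutualInfo (P.map (fun ω => (f (X ω), Y ω))) ≥
        mutualInfo (P.map (fun ω => (X ω, Y ω))) ∧
      mutualInfo (P.map (fun ω => (f (X ω), Y ω))) =
        mutualInfo (P.map (fun ω => (X ω, Y ω))) := by
  have hfm : Measurable f := hf.measurable
  have hemb : MeasurableEmbedding f := hf.measurableEmbedding hfinj
  have hXY : Measurable fun ω => (X ω, Y ω) := hX.prodMk hY
  have hfXY : Measurable fun ω => (f (X ω), Y ω) := (hfm.comp hX).prodMk hY
  set μ := P.map (fun ω => (X ω, Y ω)) with hμdef
  set ν := P.map (fun ω => (f (X ω), Y ω)) with hνdef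
  have hjoint : ∀ (A : Set 𝒳') (B : Set 𝒴), MeasurableSet A → MeasurableSet B →
      ν (A ×ˢ B) = μ ((f ⁻¹' A) ×ˢ B) := by
    intro A B hA hB
    rw [hνdef, hμdef, Measure.map_apply hfXY (hA.prod hB),
        Measure.map_apply hXY ((hfm hA).prod hB)]
    rfl
  have hfst : ∀ (A : Set 𝒳'), MeasurableSet A →
      (ν.map Prod.fst) A = (μ.map Prod.fst) (f ⁻¹' A) := by
    intro A hA
    rw [Measure.map_apply measurable_fst hA, Measure.map_apply measurable_fst (hfm hA),
        hνdef, hμdef, Measure.map_apply hfXY (measurable_fst hA),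
        Measure.map_apply hXY (measurable_fst (hfm hA))]
    rfl
  have hsnd : ν.map Prod.snd = μ.map Prod.snd := by
    rw [hνdef, hμdef, Measure.map_map measurable_snd hfXY, Measure.map_map measurable_snd hXY]
    rfl
  have key : mutualInfo ν = mutualInfo μ := by
    apply le_antisymm
    · -- data-processing direction: partitions of 𝒳' pull back to partitions of 𝒳
      simp only [mutualInfo]
      refine iSup_le fun n => iSup_le fun m => iSup_le fun E' => iSup_le fun F =>
        iSup_le fun hE' => iSup_le fun hF => ?_
      have hE : IsFinitePartition (fun i => f ⁻¹' E' i) :=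
        ⟨fun i => hfm (hE'.1 i), fun i j hij => (hE'.2.1 hij).preimage f, by
          rw [← Set.preimage_iUnion, hE'.2.2, Set.preimage_univ]⟩
      have hsum : partitionSum ν E' F = partitionSum μ (fun i => f ⁻¹' E' i) F := by
        unfold partitionSum
        refine Finset.sum_congr rfl fun i _ => Finset.sum_congr rfl fun j _ => ?_
        rw [hjoint _ _ (hE'.1 i) (hF.1 j), hfst _ (hE'.1 i), hsnd]
      rw [hsum]
      exact le_iSup_of_le n (le_iSup_of_le m (le_iSup_of_le (fun i => f ⁻¹' E' i)
        (le_iSup_of_le F (le_iSup_of_le hE (le_iSup_of_le hF le_rfl)))))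
    · -- reverse direction: partitions of 𝒳 push forward via images plus (range f)ᶜ
      simp only [mutualInfo]
      refine iSup_le fun n => iSup_le fun m => iSup_le fun E => iSup_le fun F =>
        iSup_le fun hE => iSup_le fun hF => ?_
      set E' : Fin (n + 1) → Set 𝒳' := Fin.snoc (fun i => f '' E i) (Set.range f)ᶜ with hE'def
      have hE'last : E' (Fin.last n) = (Set.range f)ᶜ := Fin.snoc_last _ _
      have hE'cast : ∀ i : Fin n, E' i.castSucc = f '' E i := fun i => Fin.snoc_castSucc _ _ i
      have hE' : IsFinitePartition E' := by
        refine ⟨?_, ?_, ?_⟩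
        · intro i
          induction i using Fin.lastCases with
          | last => rw [hE'last]; exact hemb.measurableSet_range.compl
          | cast i => rw [hE'cast]; exact hemb.measurableSet_image.2 (hE.1 i)
        · intro i j hij
          induction i using Fin.lastCases with
          | last =>
            induction j using Fin.lastCases with
            | last => exact absurd rfl hij
            | cast j =>
              rw [hE'last, hE'cast]
              exact Set.disjoint_left.2 fun x hx hx' => hx (Set.image_subset_range f _ hx')
          | cast i =>
            induction j using Fin.lastCases with
            | last =>
              rw [hE'last, hE'cast]
              exact Set.disjoint_left.2 fun x hx hx' => hx' (Set.image_subset_range f _ hx)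
            | cast j =>
              rw [hE'cast, hE'cast]
              refine Set.disjoint_image_of_injective hfinj (hE.2.1 ?_)
              exact fun h => hij (congrArg Fin.castSucc h)
        · apply Set.eq_univ_of_univ_subset
          intro x _
          by_cases hx : x ∈ Set.range f
          · obtain ⟨y, rfl⟩ := hx
            have hy : y ∈ ⋃ i, E i := hE.2.2 ▸ Set.mem_univ y
            obtain ⟨i, hi⟩ := Set.mem_iUnion.1 hy
            exact Set.mem_iUnion.2 ⟨i.castSucc, by rw [hE'cast]; exact ⟨y, hi, rfl⟩⟩
          · exact Set.mem_iUnion.2 ⟨Fin.last n, by rw [hE'last]; exact hx⟩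
      have h1 : ∀ (i : Fin n) (j : Fin m), ν (E' i.castSucc ×ˢ F j) = μ (E i ×ˢ F j) := by
        intro i j
        rw [hE'cast, hjoint _ _ (hemb.measurableSet_image.2 (hE.1 i)) (hF.1 j),
            Set.preimage_image_eq _ hfinj]
      have h2 : ∀ i : Fin n, (ν.map Prod.fst) (E' i.castSucc) = (μ.map Prod.fst) (E i) := by
        intro i
        rw [hE'cast, hfst _ (hemb.measurableSet_image.2 (hE.1 i)),
            Set.preimage_image_eq _ hfinj]
      have hlast : ∀ j : Fin m, ν (E' (Fin.last n) ×ˢ F j) = 0 := by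
        intro j
        rw [hE'last, hjoint _ _ hemb.measurableSet_range.compl (hF.1 j)]
        have h0 : f ⁻¹' (Set.range f)ᶜ = ∅ := by ext x; simp
        rw [h0, Set.empty_prod, measure_empty]
      have hsum : partitionSum ν E' F = partitionSum μ E F := by
        unfold partitionSum
        rw [Fin.sum_univ_castSucc]
        have hz : (∑ j : Fin m, (ν (E' (Fin.last n) ×ˢ F j)).toReal *
            Real.log ((ν (E' (Fin.last n) ×ˢ F j)).toReal /
              (((ν.map Prod.fst) (E' (Fin.last n))).toReal *
                ((ν.map Prod.snd) (F j)).toReal))) = 0 :=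
          Finset.sum_eq_zero fun j _ => by rw [hlast j]; simp
        rw [hz, add_zero]
        refine Finset.sum_congr rfl fun i _ => Finset.sum_congr rfl fun j _ => ?_
        rw [h1 i j, h2 i, hsnd]
      rw [← hsum]
      exact le_iSup_of_le (n + 1) (le_iSup_of_le m (le_iSup_of_le E'
        (le_iSup_of_le F (le_iSup_of_le hE' (le_iSup_of_le hF le_rfl)))))
  exact ⟨key.ge, key⟩
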